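/- Let g ≥ 1 and let X₁,…,X_g, Y₁,…,Y_g, Z₁,…,Z_g be random variables on a common probability space, each taking values in a finite set. Write X̄_i = (X₁,…,X_i), Ȳ_i = (Y₁,…,Y_i), Z̄_i = (Z₁,…,Z_i), with X̄₀, Ȳ₀, Z̄₀ constant (empty). Assume: (a) H(Z₁) = 0; (b) for every 1 ≤ i ≤ g, H(Z̄_i | X̄_{i−1}, Ȳ_{i−1}) = 0; (c) for every 2 ≤ i ≤ g, H(Ȳ_{i−2} | Z̄_{i−1}, X̄_{i−1}) = H(Ȳ_{i−2} | Z̄_{i−1}, X̄_{i−2}). Then the exact identity holds: Σ_{i=1}^g H(Z_i | X̄_{i−1}, Z̄_{i−1}) = Σ_{i=1}^g H(Y_i | X̄_i, Ȳ_{i−1}) − H(Y_g | X̄_g, Ȳ_{g−1}) − H(Ȳ_{g−1} | Z̄_g, X̄_{g−1}). -/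

import Mathlib

open MeasureTheory
open scoped ENNReal

/-- Shannon entropy of a finitely-valued random variable `X`:
`H(X) = −Σ_s p(s) log p(s)` (natural logarithm), with the convention `0 · log 0 = 0`. -/
noncomputable def shannonEntropy {Ω S : Type*} [MeasurableSpace Ω] [Fintype S]
    (μ : Measure Ω) (X : Ω → S) : ℝ :=
  -∑ s : S, (μ (X ⁻¹' {s})).toReal * Real.log (μ (X ⁻¹' {s})).toReal

/-- Conditional Shannon entropy of finitely-valued random variables:
`H(X | Y) = −Σ_{s,t} p(s,t) log (p(s,t) / p(t))`, with the convention that terms with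
`p(s,t) = 0` vanish. -/
noncomputable def condEntropy {Ω S T : Type*} [MeasurableSpace Ω] [Fintype S] [Fintype T]
    (μ : Measure Ω) (X : Ω → S) (Y : Ω → T) : ℝ :=
  -∑ s : S, ∑ t : T,
    (μ (X ⁻¹' {s} ∩ Y ⁻¹' {t})).toReal *
      Real.log ((μ (X ⁻¹' {s} ∩ Y ⁻¹' {t})).toReal / (μ (Y ⁻¹' {t})).toReal)

/-- The history tuple `X̄_i = (X₁, …, X_i)` of a family `X₁, X₂, …` of random variables
(`X̄_0` is the empty, constant, tuple). -/
def bar {Ω S : Type*} (X : ℕ → Ω → S) (i : ℕ) : Ω → (Fin i → S) :=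
  fun ω j => X (j.1 + 1) ω

namespace IURAux

set_option linter.unusedSectionVars false

open Function Set Finset

variable {Ω : Type*} [MeasurableSpace Ω] {μ : Measure Ω}

section Sums

variable {S T : Type*} [Fintype S] [Fintype T]

lemma sum_meas_inter {A : Ω → S} (hA : ∀ s, MeasurableSet (A ⁻¹' {s}))
    {E : Set Ω} (hE : MeasurableSet E) :
    ∑ s : S, μ (A ⁻¹' {s} ∩ E) = μ E := by
  have hd : Pairwise (Function.onFun Disjoint (fun s => A ⁻¹' {s} ∩ E)) := by
    intro s t hst
    simp only [Function.onFun, Set.disjoint_left]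
    rintro ω ⟨h1, _⟩ ⟨h2, _⟩
    exact hst ((Set.mem_singleton_iff.1 h1).symm.trans (Set.mem_singleton_iff.1 h2))
  rw [← tsum_fintype (L := SummationFilter.unconditional _), ← measure_iUnion hd (fun s => (hA s).inter hE)]
  congr 1
  ext ω; simp

lemma sum_meas_inter_toReal [IsFiniteMeasure μ] {A : Ω → S}
    (hA : ∀ s, MeasurableSet (A ⁻¹' {s})) {E : Set Ω} (hE : MeasurableSet E) :
    ∑ s : S, (μ (A ⁻¹' {s} ∩ E)).toReal = (μ E).toReal := by
  rw [← ENNReal.toReal_sum (fun s _ => measure_ne_top μ _), sum_meas_inter hA hE]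

lemma meas_pair {A : Ω → S} {B : Ω → T} (hA : ∀ s, MeasurableSet (A ⁻¹' {s}))
    (hB : ∀ t, MeasurableSet (B ⁻¹' {t})) :
    ∀ st : S × T, MeasurableSet ((fun ω => (A ω, B ω)) ⁻¹' {st}) := by
  rintro ⟨s, t⟩
  have : (fun ω => (A ω, B ω)) ⁻¹' {(s, t)} = A ⁻¹' {s} ∩ B ⁻¹' {t} := by
    ext ω; simp [Prod.ext_iff]
  rw [this]; exact (hA s).inter (hB t)

lemma meas_comp {S' : Type*} {f : S → S'} {A : Ω → S}
    (hA : ∀ s, MeasurableSet (A ⁻¹' {s})) :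
    ∀ s', MeasurableSet ((fun ω => f (A ω)) ⁻¹' {s'}) := by
  intro s'
  have : (fun ω => f (A ω)) ⁻¹' {s'} = ⋃ s ∈ {s : S | f s = s'}, A ⁻¹' {s} := by
    ext ω; simp [eq_comm]
  rw [this]
  exact MeasurableSet.biUnion (Set.to_countable _) (fun s _ => hA s)

end Sums

section Repr

variable {S T : Type*} [Fintype S] [Fintype T]

lemma mul_log_div_expand (p q : ℝ) (hpq : p ≠ 0 → q ≠ 0) :
    p * Real.log (p / q) = p * Real.log p - p * Real.log q := by
  rcases eq_or_ne p 0 with h | h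
  · simp [h]
  · rw [Real.log_div h (hpq h), mul_sub]

lemma condEntropy_repr [IsProbabilityMeasure μ] {A : Ω → S} {B : Ω → T}
    (hA : ∀ s, MeasurableSet (A ⁻¹' {s})) (hB : ∀ t, MeasurableSet (B ⁻¹' {t})) :
    condEntropy μ A B = shannonEntropy μ (fun ω => (A ω, B ω)) - shannonEntropy μ B := by
  have hpre : ∀ s t, (fun ω => (A ω, B ω)) ⁻¹' {(s, t)} = A ⁻¹' {s} ∩ B ⁻¹' {t} := by
    intro s t; ext ω; simp [Prod.ext_iff]
  have key : ∀ s t,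
      (μ (A ⁻¹' {s} ∩ B ⁻¹' {t})).toReal *
        Real.log ((μ (A ⁻¹' {s} ∩ B ⁻¹' {t})).toReal / (μ (B ⁻¹' {t})).toReal)
      = (μ (A ⁻¹' {s} ∩ B ⁻¹' {t})).toReal * Real.log (μ (A ⁻¹' {s} ∩ B ⁻¹' {t})).toReal
        - (μ (A ⁻¹' {s} ∩ B ⁻¹' {t})).toReal * Real.log (μ (B ⁻¹' {t})).toReal := by
    intro s t
    apply mul_log_div_expand
    intro hp hq
    apply hp
    have h0 : μ (B ⁻¹' {t}) = 0 := by
      rcases (ENNReal.toReal_eq_zero_iff _).1 hq with h | h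
      · exact h
      · exact absurd h (measure_ne_top μ _)
    have : μ (A ⁻¹' {s} ∩ B ⁻¹' {t}) = 0 :=
      measure_mono_null Set.inter_subset_right h0
    simp [this]
  have h2 : ∑ s : S, ∑ t : T,
      (μ (A ⁻¹' {s} ∩ B ⁻¹' {t})).toReal * Real.log (μ (B ⁻¹' {t})).toReal
      = ∑ t : T, (μ (B ⁻¹' {t})).toReal * Real.log (μ (B ⁻¹' {t})).toReal := by
    rw [Finset.sum_comm]
    refine Finset.sum_congr rfl fun t _ => ?_
    rw [← Finset.sum_mul, sum_meas_inter_toReal hA (hB t)]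
  unfold condEntropy shannonEntropy
  rw [Fintype.sum_prod_type]
  simp_rw [key, hpre, Finset.sum_sub_distrib]
  rw [h2]
  ring

lemma shannonEntropy_comp_inj {S' : Type*} [Fintype S'] {f : S → S'}
    (hf : Injective f) (A : Ω → S) :
    shannonEntropy μ (fun ω => f (A ω)) = shannonEntropy μ A := by
  classical
  unfold shannonEntropy
  congr 1
  calc ∑ s' : S', (μ ((fun ω => f (A ω)) ⁻¹' {s'})).toReal *
          Real.log (μ ((fun ω => f (A ω)) ⁻¹' {s'})).toReal
      = ∑ s' ∈ Finset.univ.image f, (μ ((fun ω => f (A ω)) ⁻¹' {s'})).toReal *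
          Real.log (μ ((fun ω => f (A ω)) ⁻¹' {s'})).toReal := by
        refine (Finset.sum_subset (Finset.subset_univ _) fun x _ hx => ?_).symm
        have : (fun ω => f (A ω)) ⁻¹' {x} = ∅ := by
          ext ω
          simp only [Set.mem_preimage, Set.mem_singleton_iff, Set.mem_empty_iff_false,
            iff_false]
          intro h
          exact hx (Finset.mem_image.2 ⟨A ω, Finset.mem_univ _, h⟩)
        simp [this]
    _ = ∑ s : S, (μ ((fun ω => f (A ω)) ⁻¹' {f s})).toReal *
          Real.log (μ ((fun ω => f (A ω)) ⁻¹' {f s})).toReal := by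
        rw [Finset.sum_image (fun a _ b _ h => hf h)]
    _ = ∑ s : S, (μ (A ⁻¹' {s})).toReal * Real.log (μ (A ⁻¹' {s})).toReal := by
        refine Finset.sum_congr rfl fun s _ => ?_
        have : (fun ω => f (A ω)) ⁻¹' {f s} = A ⁻¹' {s} := by
          ext ω; simp [hf.eq_iff]
        rw [this]

lemma condEntropy_comp [IsProbabilityMeasure μ] {S' T' : Type*} [Fintype S'] [Fintype T']
    {f : S → S'} {g : T → T'} (hf : Injective f) (hg : Injective g)
    {A : Ω → S} {B : Ω → T}
    (hA : ∀ s, MeasurableSet (A ⁻¹' {s})) (hB : ∀ t, MeasurableSet (B ⁻¹' {t})) :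
    condEntropy μ (fun ω => f (A ω)) (fun ω => g (B ω)) = condEntropy μ A B := by
  classical
  rw [condEntropy_repr (meas_comp hA) (meas_comp hB), condEntropy_repr hA hB,
    shannonEntropy_comp_inj hg B]
  congr 1
  have h1 : (fun ω => (f (A ω), g (B ω)))
      = fun ω => Prod.map f g ((fun ω' => (A ω', B ω')) ω) := rfl
  rw [h1, shannonEntropy_comp_inj (hf.prodMap hg)]

end Repr
section Chain

variable {S T U : Type*} [Fintype S] [Fintype T] [Fintype U] [IsProbabilityMeasure μ]

lemma condEntropy_chain {A : Ω → S} {B : Ω → T} {C : Ω → U}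
    (hA : ∀ s, MeasurableSet (A ⁻¹' {s})) (hB : ∀ t, MeasurableSet (B ⁻¹' {t}))
    (hC : ∀ u, MeasurableSet (C ⁻¹' {u})) :
    condEntropy μ (fun ω => (A ω, B ω)) C
      = condEntropy μ B C + condEntropy μ A (fun ω => (B ω, C ω)) := by
  rw [condEntropy_repr (meas_pair hA hB) hC, condEntropy_repr hB hC,
    condEntropy_repr hA (meas_pair hB hC)]
  have h1 : shannonEntropy μ (fun ω => ((A ω, B ω), C ω))
      = shannonEntropy μ (fun ω => (A ω, (B ω, C ω))) := by
    have : (fun ω => ((A ω, B ω), C ω))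
        = fun ω => (Equiv.prodAssoc S T U).symm ((fun ω' => (A ω', (B ω', C ω'))) ω) := rfl
    rw [this, shannonEntropy_comp_inj (Equiv.prodAssoc S T U).symm.injective]
  rw [h1]; ring

lemma condEntropy_sym {A : Ω → S} {B : Ω → T} {C : Ω → U}
    (hA : ∀ s, MeasurableSet (A ⁻¹' {s})) (hB : ∀ t, MeasurableSet (B ⁻¹' {t}))
    (hC : ∀ u, MeasurableSet (C ⁻¹' {u})) :
    condEntropy μ B C + condEntropy μ A (fun ω => (B ω, C ω))
      = condEntropy μ A C + condEntropy μ B (fun ω => (A ω, C ω)) := by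
  rw [← condEntropy_chain hA hB hC, ← condEntropy_chain hB hA hC]
  have : (fun ω => (A ω, B ω)) = fun ω => Prod.swap ((fun ω' => (B ω', A ω')) ω) := rfl
  rw [this]
  exact condEntropy_comp Prod.swap_injective injective_id (meas_pair hB hA) hC

lemma condEntropy_swap {A : Ω → S} {P : Ω → T} {Q : Ω → U}
    (hA : ∀ s, MeasurableSet (A ⁻¹' {s})) (hP : ∀ t, MeasurableSet (P ⁻¹' {t}))
    (hQ : ∀ u, MeasurableSet (Q ⁻¹' {u})) :
    condEntropy μ A (fun ω => (P ω, Q ω)) = condEntropy μ A (fun ω => (Q ω, P ω)) := by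
  have : (fun ω => (P ω, Q ω)) = fun ω => Prod.swap ((fun ω' => (Q ω', P ω')) ω) := rfl
  rw [this]
  exact condEntropy_comp injective_id Prod.swap_injective hA (meas_pair hQ hP)

lemma condEntropy_compL {S' : Type*} [Fintype S'] {f : S → S'} (hf : Injective f)
    {A : Ω → S} {B : Ω → T}
    (hA : ∀ s, MeasurableSet (A ⁻¹' {s})) (hB : ∀ t, MeasurableSet (B ⁻¹' {t})) :
    condEntropy μ (fun ω => f (A ω)) B = condEntropy μ A B :=
  condEntropy_comp hf injective_id hA hB

end Chain

section Zero

variable {S T : Type*} [Fintype S] [Fintype T] [IsProbabilityMeasure μ]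

lemma condEntropy_eq_zero_of {A : Ω → S} {B : Ω → T}
    (h : ∀ s t, μ (A ⁻¹' {s} ∩ B ⁻¹' {t}) = 0 ∨
      μ (A ⁻¹' {s} ∩ B ⁻¹' {t}) = μ (B ⁻¹' {t})) :
    condEntropy μ A B = 0 := by
  unfold condEntropy
  rw [neg_eq_zero]
  refine Finset.sum_eq_zero fun s _ => Finset.sum_eq_zero fun t _ => ?_
  rcases h s t with h0 | h1
  · simp [h0]
  · rw [h1]
    rcases eq_or_ne (μ (B ⁻¹' {t})) 0 with hb0 | hb0
    · simp [hb0]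
    · rw [div_self (ENNReal.toReal_ne_zero.2 ⟨hb0, measure_ne_top μ _⟩), Real.log_one,
        mul_zero]

lemma cells_of_condEntropy_eq_zero {A : Ω → S} {B : Ω → T}
    (h : condEntropy μ A B = 0) :
    ∀ s t, μ (A ⁻¹' {s} ∩ B ⁻¹' {t}) = 0 ∨
      μ (A ⁻¹' {s} ∩ B ⁻¹' {t}) = μ (B ⁻¹' {t}) := by
  have hterm : ∀ s t, 0 ≤ -((μ (A ⁻¹' {s} ∩ B ⁻¹' {t})).toReal *
      Real.log ((μ (A ⁻¹' {s} ∩ B ⁻¹' {t})).toReal / (μ (B ⁻¹' {t})).toReal)) := by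
    intro s t
    set p := (μ (A ⁻¹' {s} ∩ B ⁻¹' {t})).toReal with hp
    set q := (μ (B ⁻¹' {t})).toReal with hq
    have hp0 : 0 ≤ p := ENNReal.toReal_nonneg
    have hpq : p ≤ q := ENNReal.toReal_mono (measure_ne_top μ _)
      (measure_mono Set.inter_subset_right)
    have hlog : Real.log (p / q) ≤ 0 := by
      rcases le_or_gt q 0 with h' | h'
      · have : p = 0 := le_antisymm (hpq.trans h') hp0
        simp [this]
      · exact Real.log_nonpos (div_nonneg hp0 h'.le) ((div_le_one h').2 hpq)
    have := mul_le_mul_of_nonneg_left hlog hp0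
    simpa using this
  have hzero : ∀ s ∈ Finset.univ, ∀ t ∈ Finset.univ,
      -((μ (A ⁻¹' {s} ∩ B ⁻¹' {t})).toReal *
        Real.log ((μ (A ⁻¹' {s} ∩ B ⁻¹' {t})).toReal / (μ (B ⁻¹' {t})).toReal)) = 0 := by
    have hsum : ∑ s : S, ∑ t : T, -((μ (A ⁻¹' {s} ∩ B ⁻¹' {t})).toReal *
        Real.log ((μ (A ⁻¹' {s} ∩ B ⁻¹' {t})).toReal / (μ (B ⁻¹' {t})).toReal)) = 0 := by
      unfold condEntropy at h
      rw [← Finset.sum_neg_distrib] at h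
      simp_rw [← Finset.sum_neg_distrib] at h
      exact h
    intro s hs t ht
    have h1 := (Finset.sum_eq_zero_iff_of_nonneg
      (fun s _ => Finset.sum_nonneg (fun t _ => hterm s t))).1 hsum s hs
    exact (Finset.sum_eq_zero_iff_of_nonneg (fun t _ => hterm s t)).1 h1 t ht
  intro s t
  have h0 := hzero s (Finset.mem_univ s) t (Finset.mem_univ t)
  rw [neg_eq_zero, mul_eq_zero] at h0
  set p := (μ (A ⁻¹' {s} ∩ B ⁻¹' {t})).toReal with hp
  set q := (μ (B ⁻¹' {t})).toReal with hq
  rcases h0 with h0 | h0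
  · left
    rcases (ENNReal.toReal_eq_zero_iff _).1 h0 with h' | h'
    · exact h'
    · exact absurd h' (measure_ne_top μ _)
  · rcases eq_or_ne (μ (A ⁻¹' {s} ∩ B ⁻¹' {t})) 0 with hz | hz
    · exact Or.inl hz
    · right
      have hppos : 0 < p := ENNReal.toReal_pos hz (measure_ne_top μ _)
      have hpq : p ≤ q := ENNReal.toReal_mono (measure_ne_top μ _)
        (measure_mono Set.inter_subset_right)
      have hqpos : 0 < q := lt_of_lt_of_le hppos hpq
      rcases Real.log_eq_zero.1 h0 with h' | h' | h'
      · exact absurd h' (ne_of_gt (div_pos hppos hqpos))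
      · have : p = q := (div_eq_one_iff_eq (ne_of_gt hqpos)).1 h'
        exact (ENNReal.toReal_eq_toReal_iff' (measure_ne_top μ _) (measure_ne_top μ _)).1 this
      · nlinarith [div_pos hppos hqpos]

lemma condEntropy_zero_refine {T' : Type*} [Fintype T'] {A : Ω → S} {B : Ω → T} {C : Ω → T'}
    (hA : ∀ s, MeasurableSet (A ⁻¹' {s})) (r : T' → T) (h : condEntropy μ A B = 0)
    (hr : ∀ ω, B ω = r (C ω)) : condEntropy μ A C = 0 := by
  apply condEntropy_eq_zero_of
  intro s t'
  have hsub : C ⁻¹' {t'} ⊆ B ⁻¹' {r t'} := by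
    intro ω hω
    simp only [Set.mem_preimage, Set.mem_singleton_iff] at hω ⊢
    rw [hr, hω]
  rcases cells_of_condEntropy_eq_zero h s (r t') with h0 | h1
  · exact Or.inl (measure_mono_null (Set.inter_subset_inter_right _ hsub) h0)
  · right
    have hBdiff : μ (B ⁻¹' {r t'} \ A ⁻¹' {s}) = 0 := by
      have hd := measure_inter_add_diff (μ := μ) (B ⁻¹' {r t'}) (hA s)
      rw [Set.inter_comm] at hd
      rw [h1] at hd
      have := measure_ne_top μ (B ⁻¹' {r t'})
      nth_rewrite 2 [← add_zero (μ (B ⁻¹' {r t'}))] at hd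
      exact (ENNReal.add_right_inj this).1 hd
    have hCdiff : μ (C ⁻¹' {t'} \ A ⁻¹' {s}) = 0 :=
      measure_mono_null (Set.diff_subset_diff_left hsub) hBdiff
    have hd := measure_inter_add_diff (μ := μ) (C ⁻¹' {t'}) (hA s)
    rw [hCdiff, add_zero, Set.inter_comm] at hd
    exact hd

lemma condEntropy_unique_left [Unique S] (A : Ω → S) (B : Ω → T) :
    condEntropy μ A B = 0 := by
  apply condEntropy_eq_zero_of
  intro s t
  right
  have : A ⁻¹' {s} = Set.univ := by
    ext ω; simp [Subsingleton.elim (A ω) s]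
  rw [this, Set.univ_inter]

lemma condEntropy_unique_right [Unique T] (A : Ω → S) (B : Ω → T) :
    condEntropy μ A B = shannonEntropy μ A := by
  unfold condEntropy shannonEntropy
  congr 1
  rw [Fintype.sum_congr _ _ (fun s => Fintype.sum_unique _)]
  refine Finset.sum_congr rfl fun s _ => ?_
  have hB : B ⁻¹' {(default : T)} = Set.univ := by
    ext ω; simp [Subsingleton.elim (B ω) default]
  rw [hB, Set.inter_univ]
  simp

end Zero

section Bar

def esplit {S : Type*} (i : ℕ) : (Fin (i+1) → S) → S × (Fin i → S) :=
  fun v => (v (Fin.last i), fun k => v k.castSucc)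

lemma esplit_inj {S : Type*} (i : ℕ) : Injective (esplit (S := S) i) := by
  intro v w h
  have h1 := congrArg Prod.fst h
  have h2 := congrArg Prod.snd h
  simp only [esplit] at h1 h2
  funext k
  refine Fin.lastCases ?_ ?_ k
  · exact h1
  · intro j; exact congrFun h2 j

lemma bar_meas {S : Type*} [MeasurableSpace S] [MeasurableSingletonClass S]
    {X : ℕ → Ω → S} (hX : ∀ i, Measurable (X i)) (i : ℕ) :
    ∀ v, MeasurableSet (bar X i ⁻¹' {v}) := by
  intro v
  have : bar X i ⁻¹' {v} = ⋂ j : Fin i, X (j.1 + 1) ⁻¹' {v j} := by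
    ext ω
    simp only [Set.mem_preimage, Set.mem_singleton_iff, Set.mem_iInter, funext_iff]
    rfl
  rw [this]
  exact MeasurableSet.iInter fun j => hX _ (measurableSet_singleton _)

end Bar

section Step

variable {S T U : Type*} [Fintype S] [Fintype T] [Fintype U] [IsProbabilityMeasure μ]

set_option maxHeartbeats 2000000 in
lemma step_lemma (X : ℕ → Ω → S) (Y : ℕ → Ω → T) (Z : ℕ → Ω → U)
    (hXm : ∀ i v, MeasurableSet (bar X i ⁻¹' {v}))
    (hYm : ∀ i v, MeasurableSet (bar Y i ⁻¹' {v}))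
    (hZm : ∀ i v, MeasurableSet (bar Z i ⁻¹' {v}))
    (hY1 : ∀ i v, MeasurableSet (Y i ⁻¹' {v}))
    (hZ1 : ∀ i v, MeasurableSet (Z i ⁻¹' {v}))
    (k : ℕ)
    (h2 : condEntropy μ (bar Z (k+1+1)) (fun ω => (bar X (k+1) ω, bar Y (k+1) ω)) = 0)
    (h1 : condEntropy μ (bar Z (k+1)) (fun ω => (bar X k ω, bar Y k ω)) = 0)
    (hcc : condEntropy μ (bar Y k) (fun ω => (bar Z (k+1) ω, bar X (k+1) ω)) =
      condEntropy μ (bar Y k) (fun ω => (bar Z (k+1) ω, bar X k ω))) :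
    condEntropy μ (Z (k+1+1)) (fun ω => (bar X (k+1) ω, bar Z (k+1) ω))
      = condEntropy μ (Y (k+1)) (fun ω => (bar X (k+1) ω, bar Y k ω))
        + condEntropy μ (bar Y k) (fun ω => (bar Z (k+1) ω, bar X k ω))
        - condEntropy μ (bar Y (k+1)) (fun ω => (bar Z (k+1+1) ω, bar X (k+1) ω)) := by
  have swL : condEntropy μ (Z (k+1+1)) (fun ω => (bar X (k+1) ω, bar Z (k+1) ω))
      = condEntropy μ (Z (k+1+1)) (fun ω => (bar Z (k+1) ω, bar X (k+1) ω)) :=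
    condEntropy_swap (hZ1 _) (hXm _) (hZm _)
  have e1 : condEntropy μ (bar Z (k+1+1)) (bar X (k+1))
      = condEntropy μ (bar Z (k+1)) (bar X (k+1))
        + condEntropy μ (Z (k+1+1)) (fun ω => (bar Z (k+1) ω, bar X (k+1) ω)) := by
    rw [← condEntropy_chain (hZ1 (k+1+1)) (hZm (k+1)) (hXm (k+1))]
    exact (condEntropy_compL (esplit_inj (k+1)) (hZm (k+1+1)) (hXm (k+1))).symm
  have z2 : condEntropy μ (bar Z (k+1+1)) (fun ω => (bar Y (k+1) ω, bar X (k+1) ω)) = 0 :=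
    condEntropy_zero_refine (hZm _) Prod.swap h2 (fun ω => rfl)
  have e2 := condEntropy_sym (μ := μ) (hYm (k+1)) (hZm (k+1+1)) (hXm (k+1))
  have z3 : condEntropy μ (bar Z (k+1)) (fun ω => (bar Y k ω, bar X (k+1) ω)) = 0 :=
    condEntropy_zero_refine (hZm _)
      (fun p : (Fin k → T) × (Fin (k+1) → S) => ((fun j : Fin k => p.2 j.castSucc), p.1)) h1 (fun ω => rfl)
  have e3 := condEntropy_sym (μ := μ) (hYm k) (hZm (k+1)) (hXm (k+1))
  have e4 : condEntropy μ (bar Y (k+1)) (bar X (k+1))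
      = condEntropy μ (bar Y k) (bar X (k+1))
        + condEntropy μ (Y (k+1)) (fun ω => (bar Y k ω, bar X (k+1) ω)) := by
    rw [← condEntropy_chain (hY1 (k+1)) (hYm k) (hXm (k+1))]
    exact (condEntropy_compL (esplit_inj k) (hYm (k+1)) (hXm (k+1))).symm
  have swb : condEntropy μ (Y (k+1)) (fun ω => (bar Y k ω, bar X (k+1) ω))
      = condEntropy μ (Y (k+1)) (fun ω => (bar X (k+1) ω, bar Y k ω)) :=
    condEntropy_swap (hY1 _) (hYm _) (hXm _)
  rw [swL]
  rw [z2] at e2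
  rw [z3] at e3
  rw [hcc] at e3
  linarith [e1, e2, e3, e4, swb]

end Step

end IURAux

set_option maxHeartbeats 1000000 in
/-- Under hypotheses (a) `H(Z₁) = 0`, (b) `H(Z̄_i | X̄_{i−1}, Ȳ_{i−1}) = 0`
for `1 ≤ i ≤ g`, and (c) `H(Ȳ_{i−2} | Z̄_{i−1}, X̄_{i−1}) = H(Ȳ_{i−2} | Z̄_{i−1}, X̄_{i−2})`
for `2 ≤ i ≤ g`, the exact identity holds:
`Σ_{i=1}^g H(Z_i | X̄_{i−1}, Z̄_{i−1})
  = Σ_{i=1}^g H(Y_i | X̄_i, Ȳ_{i−1}) − H(Y_g | X̄_g, Ȳ_{g−1}) − H(Ȳ_{g−1} | Z̄_g, X̄_{g−1})`. -/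
theorem iur_exact_identity {Ω S T U : Type*} [MeasurableSpace Ω]
    [Fintype S] [Fintype T] [Fintype U]
    [MeasurableSpace S] [MeasurableSingletonClass S]
    [MeasurableSpace T] [MeasurableSingletonClass T]
    [MeasurableSpace U] [MeasurableSingletonClass U]
    (μ : Measure Ω) [IsProbabilityMeasure μ] (g : ℕ) (hg : 1 ≤ g)
    (X : ℕ → Ω → S) (Y : ℕ → Ω → T) (Z : ℕ → Ω → U)
    (hX : ∀ i, Measurable (X i)) (hY : ∀ i, Measurable (Y i)) (hZ : ∀ i, Measurable (Z i))
    (ha : shannonEntropy μ (Z 1) = 0)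
    (hb : ∀ i, 1 ≤ i → i ≤ g →
      condEntropy μ (bar Z i) (fun ω => (bar X (i - 1) ω, bar Y (i - 1) ω)) = 0)
    (hc : ∀ i, 2 ≤ i → i ≤ g →
      condEntropy μ (bar Y (i - 2)) (fun ω => (bar Z (i - 1) ω, bar X (i - 1) ω)) =
        condEntropy μ (bar Y (i - 2)) (fun ω => (bar Z (i - 1) ω, bar X (i - 2) ω))) :
    (∑ i ∈ Finset.Icc 1 g,
        condEntropy μ (Z i) (fun ω => (bar X (i - 1) ω, bar Z (i - 1) ω)))
      = (∑ i ∈ Finset.Icc 1 g,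
          condEntropy μ (Y i) (fun ω => (bar X i ω, bar Y (i - 1) ω)))
        - condEntropy μ (Y g) (fun ω => (bar X g ω, bar Y (g - 1) ω))
        - condEntropy μ (bar Y (g - 1)) (fun ω => (bar Z g ω, bar X (g - 1) ω)) := by
  classical
  have hXm : ∀ (i : ℕ) (v : Fin i → S), MeasurableSet (bar X i ⁻¹' {v}) :=
    fun i => IURAux.bar_meas hX i
  have hYm : ∀ (i : ℕ) (v : Fin i → T), MeasurableSet (bar Y i ⁻¹' {v}) :=
    fun i => IURAux.bar_meas hY i
  have hZm : ∀ (i : ℕ) (v : Fin i → U), MeasurableSet (bar Z i ⁻¹' {v}) :=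
    fun i => IURAux.bar_meas hZ i
  have hY1 : ∀ (i : ℕ) (v : T), MeasurableSet (Y i ⁻¹' {v}) :=
    fun i v => hY i (measurableSet_singleton v)
  have hZ1 : ∀ (i : ℕ) (v : U), MeasurableSet (Z i ⁻¹' {v}) :=
    fun i v => hZ i (measurableSet_singleton v)
  obtain ⟨n, rfl⟩ : ∃ n, g = n + 1 := ⟨g - 1, by omega⟩
  haveI hu1 : Unique (Fin 0 → S) := Pi.uniqueOfIsEmpty _
  haveI hu2 : Unique (Fin 0 → U) := Pi.uniqueOfIsEmpty _
  haveI hu3 : Unique ((Fin 0 → S) × (Fin 0 → U)) :=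
    ⟨⟨hu1.default, hu2.default⟩, fun p => Prod.ext (Subsingleton.elim _ _) (Subsingleton.elim _ _)⟩
  have hL0 : condEntropy μ (Z 1) (fun ω => (bar X 0 ω, bar Z 0 ω)) = 0 := by
    rw [IURAux.condEntropy_unique_right (Z 1) (fun ω => (bar X 0 ω, bar Z 0 ω))]
    exact ha
  have ha0 : condEntropy μ (bar Y 0) (fun ω => (bar Z 1 ω, bar X 0 ω)) = 0 :=
    IURAux.condEntropy_unique_left _ _
  have main : ∀ k, k + 1 ≤ n + 1 →
      (∑ j ∈ Finset.range (k+1),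
          condEntropy μ (Z (j+1)) (fun ω => (bar X j ω, bar Z j ω)))
        = (∑ j ∈ Finset.range k,
            condEntropy μ (Y (j+1)) (fun ω => (bar X (j+1) ω, bar Y j ω)))
          - condEntropy μ (bar Y k) (fun ω => (bar Z (k+1) ω, bar X k ω)) := by
    intro k
    induction k with
    | zero =>
      intro _
      rw [Finset.sum_range_one, Finset.sum_range_zero, zero_sub]
      show condEntropy μ (Z 1) (fun ω => (bar X 0 ω, bar Z 0 ω))
        = -condEntropy μ (bar Y 0) (fun ω => (bar Z 1 ω, bar X 0 ω))
      rw [hL0, ha0, neg_zero]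
    | succ m ih =>
      intro hle
      have ihm := ih (by omega)
      have hstep := IURAux.step_lemma (μ := μ) X Y Z hXm hYm hZm hY1 hZ1 m
        (hb (m+2) (by omega) (by omega))
        (hb (m+1) (by omega) (by omega))
        (hc (m+2) (by omega) (by omega))
      rw [Finset.sum_range_succ, ihm, hstep, Finset.sum_range_succ]
      ring
  have hIcc : ∀ (f : ℕ → ℝ),
      ∑ i ∈ Finset.Icc 1 (n+1), f i = ∑ j ∈ Finset.range (n+1), f (j+1) := by
    intro f
    rw [← Finset.Ico_add_one_right_eq_Icc, Finset.sum_Ico_eq_sum_range]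
    simp [add_comm]
  rw [hIcc, hIcc]
  have hmain := main n (le_refl _)
  show (∑ j ∈ Finset.range (n+1),
        condEntropy μ (Z (j+1)) (fun ω => (bar X j ω, bar Z j ω)))
      = (∑ j ∈ Finset.range (n+1),
          condEntropy μ (Y (j+1)) (fun ω => (bar X (j+1) ω, bar Y j ω)))
        - condEntropy μ (Y (n+1)) (fun ω => (bar X (n+1) ω, bar Y n ω))
        - condEntropy μ (bar Y n) (fun ω => (bar Z (n+1) ω, bar X n ω))
  conv_rhs => rw [Finset.sum_range_succ]
  linarith [hmain]
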